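/- Let n₁, n₂ ≥ 2 be coprime integers. There exists φ₀ > 0 such that for every irrational φ with 0 < φ < φ₀ the following holds for the planar Lissajous curve L(t) = (cos(2π n₁ t), cos(2π n₂ (t + φ))): the set of unordered pairs {s, t} with s, t ∈ [0,1), s ≠ t and L(s) = L(t) is exactly the union of (type I) the pairs { −φ + (l/n₂ − k/n₁)/2 , −φ + (l/n₂ + k/n₁)/2 } over integers k ≥ 1, l ≥ 1 with n₂k < n₁l and n₂k + n₁l < 2n₁n₂, and (type II) the pairs { (k/n₁ − l/n₂)/2 , (k/n₁ + l/n₂)/2 } over integers k ≥ 1, l ≥ 1 with n₁l < n₂k and n₂k + n₁l < 2n₁n₂; moreover distinct index pairs (k, l) give distinct unordered pairs. -/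

import Mathlib

open Real

private lemma liss_cos_iff (n : ℕ) (x y : ℝ) :
    Real.cos (2 * π * n * x) = Real.cos (2 * π * n * y) ↔
      (∃ m : ℤ, (n : ℝ) * (y - x) = m) ∨ (∃ m : ℤ, (n : ℝ) * (y + x) = m) := by
  rw [Real.cos_eq_cos_iff]
  have h2π : (2 * π : ℝ) ≠ 0 := by positivity
  constructor
  · rintro ⟨k, h | h⟩
    · exact Or.inl ⟨k, mul_left_cancel₀ h2π (by linear_combination h)⟩
    · exact Or.inr ⟨k, mul_left_cancel₀ h2π (by linear_combination h)⟩
  · rintro (⟨m, h⟩ | ⟨m, h⟩)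
    · exact ⟨m, Or.inl (by linear_combination 2 * π * h)⟩
    · exact ⟨m, Or.inr (by linear_combination 2 * π * h)⟩

private lemma liss_boundary (n₁ n₂ : ℕ) (h₁ : 2 ≤ n₁) (h₂ : 2 ≤ n₂) (hcop : Nat.Coprime n₁ n₂)
    (a l : ℤ) (ha : 1 ≤ a) (hl : 1 ≤ l) (hlt : (n₂:ℤ)*a < (n₁:ℤ)*l)
    (he : (n₂:ℤ)*a + (n₁:ℤ)*l = 2*n₁*n₂) : False := by
  have hco : IsCoprime (n₁:ℤ) (n₂:ℤ) := Nat.Coprime.isCoprime hcop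
  have hn1 : (2:ℤ) ≤ n₁ := by exact_mod_cast h₁
  have hn2 : (2:ℤ) ≤ n₂ := by exact_mod_cast h₂
  have hd1 : (n₁:ℤ) ∣ (n₂:ℤ) * a := ⟨2*n₂ - l, by linear_combination he⟩
  have hd2 : (n₂:ℤ) ∣ (n₁:ℤ) * l := ⟨2*n₁ - a, by linear_combination he⟩
  obtain ⟨a', rfl⟩ := hco.dvd_of_dvd_mul_left hd1
  obtain ⟨l', rfl⟩ := hco.symm.dvd_of_dvd_mul_left hd2
  have hP : (0:ℤ) < n₁ * n₂ := by positivity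
  have hsum : a' + l' = 2 := by
    have h' : (n₁*n₂ : ℤ) * (a' + l') = (n₁*n₂ : ℤ) * 2 := by linear_combination he
    exact mul_left_cancel₀ hP.ne' h'
  have hal : a' < l' := by
    have h' : (n₁*n₂ : ℤ) * a' < (n₁*n₂ : ℤ) * l' := by
      calc (n₁*n₂:ℤ)*a' = n₂*(n₁*a') := by ring
        _ < n₁*(n₂*l') := hlt
        _ = (n₁*n₂:ℤ)*l' := by ring
    exact (mul_lt_mul_iff_right₀ hP).mp h'
  have ha' : 1 ≤ a' := by
    by_contra h
    push_neg at h
    have : (n₁:ℤ) * a' ≤ 0 :=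
      mul_nonpos_of_nonneg_of_nonpos (by linarith) (by linarith)
    linarith
  linarith

private lemma liss_typeI_forward (n₁ n₂ : ℕ) (h₁ : 2 ≤ n₁) (h₂ : 2 ≤ n₂)
    (hcop : Nat.Coprime n₁ n₂) (φ s t : ℝ) (hφ0 : 0 < φ) (hφlt : φ < 1/(2*n₁*n₂))
    (hs0 : 0 ≤ s) (ht1 : t < 1) (hlt : s < t) (a l : ℤ)
    (ha : (n₁:ℝ) * (t - s) = a) (hl : (n₂:ℝ) * (t + s + 2*φ) = l) :
    (1 ≤ a ∧ 1 ≤ l ∧ (n₂:ℤ)*a < (n₁:ℤ)*l ∧ (n₂:ℤ)*a + (n₁:ℤ)*l < 2*n₁*n₂) ∧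
      s = -φ + ((l:ℝ)/n₂ - (a:ℝ)/n₁)/2 ∧ t = -φ + ((l:ℝ)/n₂ + (a:ℝ)/n₁)/2 := by
  have hN : (0:ℝ) < n₁ := by exact_mod_cast (by omega : 0 < n₁)
  have hM : (0:ℝ) < n₂ := by exact_mod_cast (by omega : 0 < n₂)
  have ha1 : 1 ≤ a := by
    have h : (0:ℝ) < (a:ℝ) := ha ▸ mul_pos hN (by linarith)
    have : (0:ℤ) < a := by exact_mod_cast h
    omega
  have hl1 : 1 ≤ l := by
    have h : (0:ℝ) < (l:ℝ) := hl ▸ mul_pos hM (by linarith)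
    have : (0:ℤ) < l := by exact_mod_cast h
    omega
  have key1 : (n₁:ℝ)*(l:ℝ) - (n₂:ℝ)*(a:ℝ) = (n₁:ℝ)*(n₂:ℝ)*(2*s+2*φ) := by
    linear_combination (n₂:ℝ)*ha - (n₁:ℝ)*hl
  have key2 : (n₂:ℝ)*(a:ℝ) + (n₁:ℝ)*(l:ℝ) = (n₁:ℝ)*(n₂:ℝ)*(2*t+2*φ) := by
    linear_combination -(n₂:ℝ)*ha - (n₁:ℝ)*hl
  have hltR : (n₂:ℝ)*(a:ℝ) < (n₁:ℝ)*(l:ℝ) := by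
    nlinarith [mul_pos hN hM]
  have hltZ : (n₂:ℤ)*a < (n₁:ℤ)*l := by exact_mod_cast hltR
  have h2φ : φ * (2*(n₁:ℝ)*n₂) < 1 := by
    rw [lt_div_iff₀ (by positivity)] at hφlt
    exact hφlt
  have hbndR : (n₂:ℝ)*(a:ℝ) + (n₁:ℝ)*(l:ℝ) < 2*(n₁:ℝ)*n₂ + 1 := by
    nlinarith [mul_pos hN hM]
  have hbndZ : (n₂:ℤ)*a + (n₁:ℤ)*l < 2*n₁*n₂ + 1 := by exact_mod_cast hbndR
  have hbnd : (n₂:ℤ)*a + (n₁:ℤ)*l < 2*n₁*n₂ := by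
    rcases lt_or_eq_of_le (by omega : (n₂:ℤ)*a + (n₁:ℤ)*l ≤ 2*n₁*n₂) with h | h
    · exact h
    · exact absurd h (fun h => liss_boundary n₁ n₂ h₁ h₂ hcop a l ha1 hl1 hltZ h)
  have e1 : t - s = (a:ℝ)/n₁ := by rw [eq_div_iff hN.ne']; linear_combination ha
  have e2 : t + s + 2*φ = (l:ℝ)/n₂ := by rw [eq_div_iff hM.ne']; linear_combination hl
  exact ⟨⟨ha1, hl1, hltZ, hbnd⟩, by linarith, by linarith⟩

private lemma liss_typeII_forward (n₁ n₂ : ℕ) (h₁ : 2 ≤ n₁) (h₂ : 2 ≤ n₂)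
    (hcop : Nat.Coprime n₁ n₂) (s t : ℝ)
    (hs0 : 0 ≤ s) (ht1 : t < 1) (hlt : s < t) (k l : ℤ)
    (hk : (n₁:ℝ) * (t + s) = k) (hl : (n₂:ℝ) * (t - s) = l) :
    (1 ≤ k ∧ 1 ≤ l ∧ (n₁:ℤ)*l < (n₂:ℤ)*k ∧ (n₂:ℤ)*k + (n₁:ℤ)*l < 2*n₁*n₂) ∧
      s = ((k:ℝ)/n₁ - (l:ℝ)/n₂)/2 ∧ t = ((k:ℝ)/n₁ + (l:ℝ)/n₂)/2 := by
  have hN : (0:ℝ) < n₁ := by exact_mod_cast (by omega : 0 < n₁)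
  have hM : (0:ℝ) < n₂ := by exact_mod_cast (by omega : 0 < n₂)
  have hk1 : 1 ≤ k := by
    have h : (0:ℝ) < (k:ℝ) := hk ▸ mul_pos hN (by linarith)
    have : (0:ℤ) < k := by exact_mod_cast h
    omega
  have hl1 : 1 ≤ l := by
    have h : (0:ℝ) < (l:ℝ) := hl ▸ mul_pos hM (by linarith)
    have : (0:ℤ) < l := by exact_mod_cast h
    omega
  have key1 : (n₂:ℝ)*(k:ℝ) - (n₁:ℝ)*(l:ℝ) = (n₁:ℝ)*(n₂:ℝ)*(2*s) := by
    linear_combination (n₁:ℝ)*hl - (n₂:ℝ)*hk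
  have key2 : (n₂:ℝ)*(k:ℝ) + (n₁:ℝ)*(l:ℝ) = (n₁:ℝ)*(n₂:ℝ)*(2*t) := by
    linear_combination -(n₂:ℝ)*hk - (n₁:ℝ)*hl
  have hleR : (n₁:ℝ)*(l:ℝ) ≤ (n₂:ℝ)*(k:ℝ) := by
    nlinarith [mul_pos hN hM]
  have hltZ : (n₁:ℤ)*l < (n₂:ℤ)*k := by
    rcases lt_or_eq_of_le (show (n₁:ℤ)*l ≤ (n₂:ℤ)*k by exact_mod_cast hleR) with h | h
    · exact h
    · exfalso
      have heR : (n₁:ℝ)*(l:ℝ) = (n₂:ℝ)*(k:ℝ) := by exact_mod_cast h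
      have hs : s = 0 := by nlinarith [mul_pos hN hM]
      have hco : IsCoprime (n₁:ℤ) (n₂:ℤ) := Nat.Coprime.isCoprime hcop
      have hd1 : (n₁:ℤ) ∣ (n₂:ℤ) * k := ⟨l, by linarith⟩
      obtain ⟨k', hk'⟩ := hco.dvd_of_dvd_mul_left hd1
      have htk : t = (k':ℝ) := by
        have : (k:ℝ) = (n₁:ℝ) * (k':ℝ) := by exact_mod_cast hk'
        subst hs
        nlinarith [this, hk, hN]
      have h0 : (0:ℤ) < k' := by
        have : (0:ℝ) < (k':ℝ) := by rw [← htk]; linarith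
        exact_mod_cast this
      have h1 : (k':ℤ) < 1 := by
        have : (k':ℝ) < 1 := by rw [← htk]; exact ht1
        exact_mod_cast this
      omega
  have hbndR : (n₂:ℝ)*(k:ℝ) + (n₁:ℝ)*(l:ℝ) < 2*(n₁:ℝ)*n₂ := by
    nlinarith [mul_pos hN hM]
  have hbnd : (n₂:ℤ)*k + (n₁:ℤ)*l < 2*n₁*n₂ := by exact_mod_cast hbndR
  have e1 : t + s = (k:ℝ)/n₁ := by rw [eq_div_iff hN.ne']; linear_combination hk
  have e2 : t - s = (l:ℝ)/n₂ := by rw [eq_div_iff hM.ne']; linear_combination hl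
  exact ⟨⟨hk1, hl1, hltZ, hbnd⟩, by linarith, by linarith⟩

private lemma liss_typeI_backward (n₁ n₂ : ℕ) (h₁ : 2 ≤ n₁) (h₂ : 2 ≤ n₂)
    (φ : ℝ) (hφ0 : 0 < φ) (hφlt : φ < 1/(2*n₁*n₂)) (a l : ℤ)
    (ha1 : 1 ≤ a) (hl1 : 1 ≤ l) (hltZ : (n₂:ℤ)*a < (n₁:ℤ)*l)
    (hbnd : (n₂:ℤ)*a + (n₁:ℤ)*l < 2*n₁*n₂) (s t : ℝ)
    (hes : s = -φ + ((l:ℝ)/n₂ - (a:ℝ)/n₁)/2) (het : t = -φ + ((l:ℝ)/n₂ + (a:ℝ)/n₁)/2) :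
    (0 ≤ s ∧ s < 1) ∧ (0 ≤ t ∧ t < 1) ∧ s ≠ t ∧
      Real.cos (2*π*n₁*s) = Real.cos (2*π*n₁*t) ∧
      Real.cos (2*π*n₂*(s+φ)) = Real.cos (2*π*n₂*(t+φ)) := by
  have hN : (0:ℝ) < n₁ := by exact_mod_cast (by omega : 0 < n₁)
  have hM : (0:ℝ) < n₂ := by exact_mod_cast (by omega : 0 < n₂)
  have hNM : (0:ℝ) < (n₁:ℝ)*n₂ := mul_pos hN hM
  have h2φ : φ * (2*(n₁:ℝ)*n₂) < 1 := by rw [lt_div_iff₀ (by positivity)] at hφlt; exact hφlt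
  have hgap : (1:ℝ) ≤ (n₁:ℝ)*l - (n₂:ℝ)*a := by
    have : (n₂:ℤ)*a + 1 ≤ (n₁:ℤ)*l := hltZ
    have := (by exact_mod_cast this : (n₂:ℝ)*(a:ℝ) + 1 ≤ (n₁:ℝ)*(l:ℝ))
    linarith
  have hgap2 : (n₂:ℝ)*a + (n₁:ℝ)*l ≤ 2*(n₁:ℝ)*n₂ - 1 := by
    have : (n₂:ℤ)*a + (n₁:ℤ)*l ≤ 2*n₁*n₂ - 1 := by omega
    exact_mod_cast this
  have haR : (1:ℝ) ≤ (a:ℝ) := by exact_mod_cast ha1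
  have hs' : 2*(n₁:ℝ)*n₂*(s+φ) = (n₁:ℝ)*l - (n₂:ℝ)*a := by
    rw [hes]; field_simp; ring
  have ht' : 2*(n₁:ℝ)*n₂*(t+φ) = (n₂:ℝ)*a + (n₁:ℝ)*l := by
    rw [het]; field_simp; ring
  have hs0 : 0 ≤ s := by nlinarith
  have hts : s < t := by nlinarith
  have ht1 : t < 1 := by nlinarith
  have hd : (n₁:ℝ) * (t - s) = a := by rw [hes, het]; field_simp; ring
  have hsum : (n₂:ℝ) * ((t+φ) + (s+φ)) = l := by rw [hes, het]; field_simp; ring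
  refine ⟨⟨hs0, by linarith⟩, ⟨by linarith, ht1⟩, hts.ne, ?_, ?_⟩
  · have h : 2*π*(n₁:ℝ)*t = 2*π*(n₁:ℝ)*s + (a:ℝ)*(2*π) := by linear_combination 2*π*hd
    rw [h, Real.cos_add_int_mul_two_pi]
  · have h : 2*π*(n₂:ℝ)*(t+φ) = (l:ℝ)*(2*π) - 2*π*(n₂:ℝ)*(s+φ) := by
      linear_combination 2*π*hsum
    rw [h, Real.cos_int_mul_two_pi_sub]

private lemma liss_typeII_backward (n₁ n₂ : ℕ) (h₁ : 2 ≤ n₁) (h₂ : 2 ≤ n₂)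
    (φ : ℝ) (k l : ℤ)
    (hk1 : 1 ≤ k) (hl1 : 1 ≤ l) (hltZ : (n₁:ℤ)*l < (n₂:ℤ)*k)
    (hbnd : (n₂:ℤ)*k + (n₁:ℤ)*l < 2*n₁*n₂) (s t : ℝ)
    (hes : s = ((k:ℝ)/n₁ - (l:ℝ)/n₂)/2) (het : t = ((k:ℝ)/n₁ + (l:ℝ)/n₂)/2) :
    (0 ≤ s ∧ s < 1) ∧ (0 ≤ t ∧ t < 1) ∧ s ≠ t ∧
      Real.cos (2*π*n₁*s) = Real.cos (2*π*n₁*t) ∧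
      Real.cos (2*π*n₂*(s+φ)) = Real.cos (2*π*n₂*(t+φ)) := by
  have hN : (0:ℝ) < n₁ := by exact_mod_cast (by omega : 0 < n₁)
  have hM : (0:ℝ) < n₂ := by exact_mod_cast (by omega : 0 < n₂)
  have hNM : (0:ℝ) < (n₁:ℝ)*n₂ := mul_pos hN hM
  have hgap : (1:ℝ) ≤ (n₂:ℝ)*k - (n₁:ℝ)*l := by
    have : (n₁:ℤ)*l + 1 ≤ (n₂:ℤ)*k := hltZ
    have := (by exact_mod_cast this : (n₁:ℝ)*(l:ℝ) + 1 ≤ (n₂:ℝ)*(k:ℝ))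
    linarith
  have hgap2 : (n₂:ℝ)*k + (n₁:ℝ)*l ≤ 2*(n₁:ℝ)*n₂ - 1 := by
    have : (n₂:ℤ)*k + (n₁:ℤ)*l ≤ 2*n₁*n₂ - 1 := by omega
    exact_mod_cast this
  have hlR : (1:ℝ) ≤ (l:ℝ) := by exact_mod_cast hl1
  have hs' : 2*(n₁:ℝ)*n₂*s = (n₂:ℝ)*k - (n₁:ℝ)*l := by rw [hes]; field_simp
  have ht' : 2*(n₁:ℝ)*n₂*t = (n₂:ℝ)*k + (n₁:ℝ)*l := by rw [het]; field_simp
  have hs0 : 0 ≤ s := by nlinarith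
  have hts : s < t := by nlinarith
  have ht1 : t < 1 := by nlinarith
  have hd : (n₁:ℝ) * (t + s) = k := by rw [hes, het]; field_simp; ring
  have hsum : (n₂:ℝ) * ((t+φ) - (s+φ)) = l := by rw [hes, het]; field_simp; ring
  refine ⟨⟨hs0, by linarith⟩, ⟨by linarith, ht1⟩, hts.ne, ?_, ?_⟩
  · have h : 2*π*(n₁:ℝ)*t = (k:ℝ)*(2*π) - 2*π*(n₁:ℝ)*s := by linear_combination 2*π*hd
    rw [h, Real.cos_int_mul_two_pi_sub]
  · have h : 2*π*(n₂:ℝ)*(t+φ) = 2*π*(n₂:ℝ)*(s+φ) + (l:ℝ)*(2*π) := by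
      linear_combination 2*π*hsum
    rw [h, Real.cos_add_int_mul_two_pi]

private lemma liss_diff_diff (n₁ n₂ : ℕ) (hcop : Nat.Coprime n₁ n₂) (s t : ℝ)
    (h1 : -1 < t - s) (h2 : t - s < 1) (hne : s ≠ t) (a b : ℤ)
    (ha : (n₁:ℝ)*(t-s) = a) (hb : (n₂:ℝ)*(t-s) = b) : False := by
  have hbez : ((1:ℕ):ℤ) = (n₁:ℤ) * Int.gcdA n₁ n₂ + (n₂:ℤ) * Int.gcdB n₁ n₂ := by
    have h := Int.gcd_eq_gcd_ab (n₁:ℤ) (n₂:ℤ)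
    rwa [Int.gcd_natCast_natCast, Nat.Coprime.gcd_eq_one hcop] at h
  set g₁ := Int.gcdA n₁ n₂ with hg₁
  set g₂ := Int.gcdB n₁ n₂ with hg₂
  have hbR : (1:ℝ) = (n₁:ℝ)*(g₁:ℝ) + (n₂:ℝ)*(g₂:ℝ) := by exact_mod_cast hbez
  have hc : t - s = ((g₁*a + g₂*b : ℤ):ℝ) := by
    push_cast
    linear_combination (t-s)*hbR + (g₁:ℝ)*ha + (g₂:ℝ)*hb
  have hc1 : (-1:ℝ) < ((g₁*a + g₂*b : ℤ):ℝ) := by rw [← hc]; exact h1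
  have hc2 : ((g₁*a + g₂*b : ℤ):ℝ) < 1 := by rw [← hc]; exact h2
  have hz1 : (-1:ℤ) < g₁*a + g₂*b := by exact_mod_cast hc1
  have hz2 : (g₁*a + g₂*b : ℤ) < 1 := by exact_mod_cast hc2
  have : g₁*a + g₂*b = 0 := by omega
  rw [this] at hc
  exact hne (by push_cast at hc; linarith)

private lemma liss_sum_sum (n₁ n₂ : ℕ) (h₁ : 2 ≤ n₁) (h₂ : 2 ≤ n₂) (φ s t : ℝ)
    (hφirr : Irrational φ) (a b : ℤ)
    (ha : (n₁:ℝ)*(t+s) = a) (hb : (n₂:ℝ)*((t+φ)+(s+φ)) = b) : False := by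
  have key : φ * (2*(n₁:ℝ)*n₂) = (n₁:ℝ)*b - (n₂:ℝ)*a := by
    linear_combination (n₁:ℝ)*hb - (n₂:ℝ)*ha
  have hne : (((2*n₁*n₂ : ℤ)):ℝ) ≠ 0 := by
    push_cast
    have hN : (0:ℝ) < n₁ := by exact_mod_cast (by omega : 0 < n₁)
    have hM : (0:ℝ) < n₂ := by exact_mod_cast (by omega : 0 < n₂)
    positivity
  refine (irrational_iff_ne_rational φ).mp hφirr ((n₁:ℤ)*b - (n₂:ℤ)*a) (2*n₁*n₂) (by exact_mod_cast hne) ?_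
  rw [eq_div_iff hne]
  push_cast
  linarith [key]

open Real in
/-- For coprime integers `n₁, n₂ ≥ 2` there is `φ₀ > 0` such that for every
irrational `0 < φ < φ₀`, the double points of the planar Lissajous curve
`L(t) = (cos(2πn₁t), cos(2πn₂(t+φ)))` on `[0,1)` are exactly the type I pairs
`{−φ + (l/n₂ − k/n₁)/2, −φ + (l/n₂ + k/n₁)/2}` (for `k, l ≥ 1`, `n₂k < n₁l`,
`n₂k + n₁l < 2n₁n₂`) together with the type II pairs
`{(k/n₁ − l/n₂)/2, (k/n₁ + l/n₂)/2}` (for `k, l ≥ 1`, `n₁l < n₂k`, `n₂k + n₁l < 2n₁n₂`);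
moreover distinct index pairs `(k, l)` give distinct unordered pairs. -/
theorem lissajous_stmt5 (n₁ n₂ : ℕ) (h₁ : 2 ≤ n₁) (h₂ : 2 ≤ n₂) (hcop : Nat.Coprime n₁ n₂) :
    ∃ φ₀ > (0:ℝ), ∀ φ : ℝ, Irrational φ → 0 < φ → φ < φ₀ →
      let L : ℝ → ℝ × ℝ := fun t =>
        (Real.cos (2 * π * n₁ * t), Real.cos (2 * π * n₂ * (t + φ)))
      let S : Set (Sym2 ℝ) := {z | ∃ s t : ℝ, z = Sym2.mk s t ∧
        s ∈ Set.Ico (0:ℝ) 1 ∧ t ∈ Set.Ico (0:ℝ) 1 ∧ s ≠ t ∧ L s = L t}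
      let A : Set (ℤ × ℤ) := {p | 1 ≤ p.1 ∧ 1 ≤ p.2 ∧ (n₂ : ℤ) * p.1 < (n₁ : ℤ) * p.2 ∧
        (n₂ : ℤ) * p.1 + (n₁ : ℤ) * p.2 < 2 * n₁ * n₂}
      let B : Set (ℤ × ℤ) := {p | 1 ≤ p.1 ∧ 1 ≤ p.2 ∧ (n₁ : ℤ) * p.2 < (n₂ : ℤ) * p.1 ∧
        (n₂ : ℤ) * p.1 + (n₁ : ℤ) * p.2 < 2 * n₁ * n₂}
      let fI : ℤ × ℤ → Sym2 ℝ := fun p =>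
        Sym2.mk (-φ + ((p.2 : ℝ) / n₂ - (p.1 : ℝ) / n₁) / 2)
                 (-φ + ((p.2 : ℝ) / n₂ + (p.1 : ℝ) / n₁) / 2)
      let fII : ℤ × ℤ → Sym2 ℝ := fun p =>
        Sym2.mk (((p.1 : ℝ) / n₁ - (p.2 : ℝ) / n₂) / 2)
                 (((p.1 : ℝ) / n₁ + (p.2 : ℝ) / n₂) / 2)
      S = fI '' A ∪ fII '' B ∧ Set.InjOn fI A ∧ Set.InjOn fII B ∧
        ∀ p ∈ A, ∀ q ∈ B, fI p ≠ fII q := by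
  have hN : (0:ℝ) < n₁ := by exact_mod_cast (by omega : 0 < n₁)
  have hM : (0:ℝ) < n₂ := by exact_mod_cast (by omega : 0 < n₂)
  refine ⟨1/(2*(n₁:ℝ)*n₂), by positivity, ?_⟩
  intro φ hφirr hφ0 hφlt
  intro L S A B fI fII
  have hL1 : ∀ s t : ℝ, L s = L t →
      Real.cos (2*π*n₁*s) = Real.cos (2*π*n₁*t) := fun s t h => congrArg Prod.fst h
  have hL2 : ∀ s t : ℝ, L s = L t →
      Real.cos (2*π*n₂*(s+φ)) = Real.cos (2*π*n₂*(t+φ)) := fun s t h => congrArg Prod.snd h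
  refine ⟨?_, ?_, ?_, ?_⟩
  · -- S = fI '' A ∪ fII '' B
    ext z
    simp only [S, A, B, Set.mem_setOf_eq, Set.mem_union, Set.mem_image, Set.mem_Ico]
    constructor
    · rintro ⟨s, t, rfl, hs, ht, hst, hL⟩
      rcases (liss_cos_iff n₁ s t).mp (hL1 s t hL) with ⟨a, ha⟩ | ⟨a, ha⟩ <;>
        rcases (liss_cos_iff n₂ (s+φ) (t+φ)).mp (hL2 s t hL) with ⟨b, hb⟩ | ⟨b, hb⟩
      · -- diff/diff : impossible
        exact (liss_diff_diff n₁ n₂ hcop s t (by linarith [hs.1, hs.2, ht.1, ht.2])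
          (by linarith [hs.1, hs.2, ht.1, ht.2]) hst a b ha
          (by linear_combination hb)).elim
      · -- diff/sum : type I
        left
        rcases hst.lt_or_gt with hlt | hlt
        · obtain ⟨hmem, hsf, htf⟩ := liss_typeI_forward n₁ n₂ h₁ h₂ hcop φ s t hφ0 hφlt
            hs.1 ht.2 hlt a b ha (by linear_combination hb)
          refine ⟨(a, b), hmem, ?_⟩
          simp only [fI]
          rw [hsf, htf]
        · obtain ⟨hmem, htf, hsf⟩ := liss_typeI_forward n₁ n₂ h₁ h₂ hcop φ t s hφ0 hφlt
            ht.1 hs.2 hlt (-a) b (by push_cast; linear_combination -ha)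
            (by linear_combination hb)
          refine ⟨(-a, b), hmem, ?_⟩
          have hswap : Sym2.mk s t = Sym2.mk t s := Sym2.eq_swap
          simp only [fI]
          rw [hswap, htf, hsf]
      · -- sum/diff : type II
        right
        rcases hst.lt_or_gt with hlt | hlt
        · obtain ⟨hmem, hsf, htf⟩ := liss_typeII_forward n₁ n₂ h₁ h₂ hcop s t
            hs.1 ht.2 hlt a b ha (by linear_combination hb)
          refine ⟨(a, b), hmem, ?_⟩
          simp only [fII]
          rw [hsf, htf]
        · obtain ⟨hmem, htf, hsf⟩ := liss_typeII_forward n₁ n₂ h₁ h₂ hcop t s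
            ht.1 hs.2 hlt a (-b) (by linear_combination ha)
            (by push_cast; linear_combination -hb)
          refine ⟨(a, -b), hmem, ?_⟩
          have hswap : Sym2.mk s t = Sym2.mk t s := Sym2.eq_swap
          simp only [fII]
          rw [hswap, htf, hsf]
      · -- sum/sum : impossible
        exact (liss_sum_sum n₁ n₂ h₁ h₂ φ s t hφirr a b ha hb).elim
    · rintro (⟨⟨a, b⟩, hmem, rfl⟩ | ⟨⟨a, b⟩, hmem, rfl⟩)
      · obtain ⟨hm1, hm2, hm3, hm4⟩ := hmem
        obtain ⟨⟨hs0, hs1⟩, ⟨ht0, ht1⟩, hne, hc1, hc2⟩ :=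
          liss_typeI_backward n₁ n₂ h₁ h₂ φ hφ0 hφlt a b hm1 hm2 hm3 hm4 _ _ rfl rfl
        exact ⟨_, _, rfl, ⟨hs0, hs1⟩, ⟨ht0, ht1⟩, hne, Prod.ext hc1 hc2⟩
      · obtain ⟨hm1, hm2, hm3, hm4⟩ := hmem
        obtain ⟨⟨hs0, hs1⟩, ⟨ht0, ht1⟩, hne, hc1, hc2⟩ :=
          liss_typeII_backward n₁ n₂ h₁ h₂ φ a b hm1 hm2 hm3 hm4 _ _ rfl rfl
        exact ⟨_, _, rfl, ⟨hs0, hs1⟩, ⟨ht0, ht1⟩, hne, Prod.ext hc1 hc2⟩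
  · -- InjOn fI A
    rintro ⟨pa, pb⟩ hp ⟨qa, qb⟩ hq h
    simp only [A, Set.mem_setOf_eq] at hp hq
    simp only [fI, Sym2.eq_iff] at h
    rcases h with ⟨e1, e2⟩ | ⟨e1, e2⟩
    · have ea : (pa:ℝ)/n₁ = (qa:ℝ)/n₁ := by linarith
      have eb : (pb:ℝ)/n₂ = (qb:ℝ)/n₂ := by linarith
      have ha : (pa:ℝ) = qa := by
        field_simp at ea; exact_mod_cast ea
      have hb : (pb:ℝ) = qb := by
        field_simp at eb; exact_mod_cast eb
      have : pa = qa := by exact_mod_cast ha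
      have : pb = qb := by exact_mod_cast hb
      simp_all
    · exfalso
      have hsum : (pa:ℝ)/n₁ + (qa:ℝ)/n₁ = 0 := by linarith
      have h1 : (0:ℝ) < (pa:ℝ)/n₁ := div_pos (by exact_mod_cast hp.1) hN
      have h2 : (0:ℝ) < (qa:ℝ)/n₁ := div_pos (by exact_mod_cast hq.1) hN
      linarith
  · -- InjOn fII B
    rintro ⟨pa, pb⟩ hp ⟨qa, qb⟩ hq h
    simp only [B, Set.mem_setOf_eq] at hp hq
    simp only [fII, Sym2.eq_iff] at h
    rcases h with ⟨e1, e2⟩ | ⟨e1, e2⟩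
    · have ea : (pa:ℝ)/n₁ = (qa:ℝ)/n₁ := by linarith
      have eb : (pb:ℝ)/n₂ = (qb:ℝ)/n₂ := by linarith
      have ha : (pa:ℝ) = qa := by
        field_simp at ea; exact_mod_cast ea
      have hb : (pb:ℝ) = qb := by
        field_simp at eb; exact_mod_cast eb
      have : pa = qa := by exact_mod_cast ha
      have : pb = qb := by exact_mod_cast hb
      simp_all
    · exfalso
      have hsum : (pb:ℝ)/n₂ + (qb:ℝ)/n₂ = 0 := by linarith
      have h1 : (0:ℝ) < (pb:ℝ)/n₂ := div_pos (by exact_mod_cast hp.2.1) hM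
      have h2 : (0:ℝ) < (qb:ℝ)/n₂ := div_pos (by exact_mod_cast hq.2.1) hM
      linarith
  · -- disjointness
    rintro ⟨pa, pb⟩ hp ⟨qa, qb⟩ hq h
    simp only [fI, fII, Sym2.eq_iff] at h
    have hsum : -2*φ + (pb:ℝ)/n₂ = (qa:ℝ)/n₁ := by
      rcases h with ⟨e1, e2⟩ | ⟨e1, e2⟩ <;> linarith
    have hne : (((2*n₁*n₂ : ℤ)):ℝ) ≠ 0 := by push_cast; positivity
    refine (irrational_iff_ne_rational φ).mp hφirr ((n₁:ℤ)*pb - (n₂:ℤ)*qa) (2*n₁*n₂) (by exact_mod_cast hne) ?_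
    rw [eq_div_iff hne]
    push_cast
    field_simp at hsum
    linarith [hsum]
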